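/- The number of toroidal knot 1-mosaics is 7: exactly 7 of the 11 standard mosaic tiles are toroidally suitably connected as 1×1 toroidal mosaics, namely the blank tile, the horizontal line, the vertical line, the two crossing tiles, and the two double-arc tiles. -/
import Mathlib


/- The 11 standard mosaic tiles, encoded by their connection points on the four
edges (`0` = left, `1` = top, `2` = right, `3` = bottom). -/
def T0 : Fin 4 → Bool := ![false, false, false, false]  -- blank
def T1 : Fin 4 → Bool := ![true, false, false, true]    -- arc left–bottom
def T2 : Fin 4 → Bool := ![false, false, true, true]    -- arc bottom–right
def T3 : Fin 4 → Bool := ![false, true, true, false]    -- arc right–top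
def T4 : Fin 4 → Bool := ![true, true, false, false]    -- arc top–left
def T5 : Fin 4 → Bool := ![true, false, true, false]    -- horizontal line
def T6 : Fin 4 → Bool := ![false, true, false, true]    -- vertical line
def T7 : Fin 4 → Bool := ![true, true, true, true]      -- double arc
def T8 : Fin 4 → Bool := ![true, true, true, true]      -- double arc
def T9 : Fin 4 → Bool := ![true, true, true, true]      -- crossing
def T10 : Fin 4 → Bool := ![true, true, true, true]     -- crossing

/-- A single tile, as a `1×1` toroidal mosaic, is toroidally suitably connected iff its
left and right connection points agree and its top and bottom connection points agree. -/
def Connected1 (t : Fin 4 → Bool) : Prop := t 0 = t 2 ∧ t 1 = t 3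

/-- Exactly 7 of the 11 standard tiles are toroidally suitably connected `1`-mosaics,
namely the blank tile, the two lines, the two double arcs and the two crossings. -/
theorem toroidal_one_mosaics_count :
    Connected1 T0 ∧ ¬ Connected1 T1 ∧ ¬ Connected1 T2 ∧ ¬ Connected1 T3 ∧
    ¬ Connected1 T4 ∧ Connected1 T5 ∧ Connected1 T6 ∧ Connected1 T7 ∧
    Connected1 T8 ∧ Connected1 T9 ∧ Connected1 T10 ∧
    ([T0, T1, T2, T3, T4, T5, T6, T7, T8, T9, T10].countP
      (fun t => (t 0 == t 2) && (t 1 == t 3))) = 7 := by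
  refine ⟨?_,?_,?_,?_,?_,?_,?_,?_,?_,?_,?_,?_⟩ <;> simp [Connected1, T0,T1,T2,T3,T4,T5,T6,T7,T8,T9,T10]
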